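/- arXiv:1204.5981 — 7 statements merged into one kernel-verified Lean document; each statement's English description precedes it below -/
import Mathlib

section
/- For finite relational structures A and B, the following are equivalent: (i) every primitive positive sentence true in A is true in B; (ii) there exists a homomorphism from A to B; (iii) B satisfies the canonical conjunctive query of A (the existential closure of the conjunction of all positive atomic facts of A, with a variable per element of A). -/
/-- A relational signature: a type of relation symbols with arities. -/
structure Signature where
  symb : Type
  ar : symb → ℕ

/-- A relational structure over signature `σ` with domain `α`. -/
structure Struc (σ : Signature) (α : Type) where
  rel : ∀ s, (Fin (σ.ar s) → α) → Prop

/-- A homomorphism between relational structures. -/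
def IsHom {σ : Signature} {α β : Type} (A : Struc σ α) (B : Struc σ β)
    (h : α → β) : Prop :=
  ∀ s t, A.rel s t → B.rel s (fun i => h (t i))

/-- Primitive positive formulas (relational atoms, conjunction — including the
empty conjunction `top` — and existential quantification), with `n` free variables. -/
inductive PP (σ : Signature) : ℕ → Type
  | top {n} : PP σ n
  | atom {n} (s : σ.symb) (ts : Fin (σ.ar s) → Fin n) : PP σ n
  | and {n} : PP σ n → PP σ n → PP σ n
  | ex {n} : PP σ (n + 1) → PP σ n

/-- Satisfaction of a primitive positive formula under a valuation. -/
def PP.Sat {σ : Signature} {α : Type} (A : Struc σ α) :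
    ∀ {n}, PP σ n → (Fin n → α) → Prop
  | _, .top, _ => True
  | _, .atom s ts, v => A.rel s (fun i => v (ts i))
  | _, .and φ ψ, v => φ.Sat A v ∧ ψ.Sat A v
  | _, .ex φ, v => ∃ a, φ.Sat A (Fin.cons a v)

/-- Conjunction of a list of pp formulas. -/
def PP.conjList {σ : Signature} {n : ℕ} : List (PP σ n) → PP σ n
  | [] => .top
  | φ :: l => .and φ (conjList l)

/-- Existential closure of a pp formula. -/
def PP.exs {σ : Signature} : ∀ {n}, PP σ n → PP σ 0
  | 0, φ => φ
  | _ + 1, φ => exs φ.ex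

/-- The canonical conjunctive query of a finite structure `A`: the existential
closure of the conjunction of all positive atomic facts of `A`, one variable per
element of `A` (via the enumeration `e`). -/
noncomputable def canonicalQuery {σ : Signature} [Fintype σ.symb] [DecidableEq σ.symb]
    {α : Type} [Fintype α] [DecidableEq α]
    (A : Struc σ α) [∀ s t, Decidable (A.rel s t)] (e : α ≃ Fin (Fintype.card α)) :
    PP σ 0 :=
  PP.exs (PP.conjList
    (((Finset.univ.filter
        (fun p : Σ s : σ.symb, Fin (σ.ar s) → α => A.rel p.1 p.2)).toList).map
      (fun p => PP.atom p.1 (fun i => e (p.2 i)))))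

lemma PP.sat_conjList {σ : Signature} {α : Type} (A : Struc σ α) {n : ℕ}
    (l : List (PP σ n)) (v : Fin n → α) :
    (PP.conjList l).Sat A v ↔ ∀ φ ∈ l, φ.Sat A v := by
  induction l with
  | nil => simp [PP.conjList, PP.Sat]
  | cons φ l ih => simp [PP.conjList, PP.Sat, ih]

lemma PP.sat_exs {σ : Signature} {α : Type} (A : Struc σ α) :
    ∀ {n : ℕ} (φ : PP σ n) (v0 : Fin 0 → α),
    (PP.exs φ).Sat A v0 ↔ ∃ v : Fin n → α, φ.Sat A v := by
  intro n
  induction n with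
  | zero =>
    intro φ v0
    exact ⟨fun h => ⟨v0, h⟩, fun ⟨v, h⟩ => by rwa [Subsingleton.elim v0 v]⟩
  | succ n ih =>
    intro φ v0
    rw [show PP.exs φ = PP.exs φ.ex from rfl, ih]
    constructor
    · rintro ⟨v, a, h⟩; exact ⟨Fin.cons a v, h⟩
    · rintro ⟨w, h⟩
      have hw : (Fin.cons (w 0) fun i => w i.succ) = w := by
        funext i; refine Fin.cases ?_ ?_ i <;> simp [Fin.tail]
      exact ⟨fun i => w i.succ, w 0, by rwa [hw]⟩

lemma PP.sat_of_hom {σ : Signature} {α β : Type} {A : Struc σ α} {B : Struc σ β}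
    {h : α → β} (hh : IsHom A B h) :
    ∀ {n : ℕ} (φ : PP σ n) (v : Fin n → α), φ.Sat A v → φ.Sat B (fun i => h (v i)) := by
  intro n φ
  induction φ with
  | top => intro v _; trivial
  | atom s ts => intro v hv; exact hh s _ hv
  | and φ ψ ihφ ihψ => intro v hv; exact ⟨ihφ v hv.1, ihψ v hv.2⟩
  | ex φ ih =>
    rintro v ⟨a, ha⟩
    have hv : (fun i => h ((Fin.cons a v : Fin _ → α) i)) = Fin.cons (h a) (fun i => h (v i)) := by
      funext i; refine Fin.cases ?_ ?_ i <;> simp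
    exact ⟨h a, hv ▸ ih _ ha⟩

/-- For finite structures `A`, `B`, the following are equivalent:
(i) every pp sentence true in `A` is true in `B`; (ii) there is a homomorphism
`A → B`; (iii) `B` satisfies the canonical conjunctive query of `A`. -/
theorem pp_containment_tfae {σ : Signature} [Fintype σ.symb] [DecidableEq σ.symb]
    {α β : Type} [Fintype α] [DecidableEq α] [Fintype β]
    (A : Struc σ α) (B : Struc σ β) [∀ s t, Decidable (A.rel s t)]
    (e : α ≃ Fin (Fintype.card α)) :
    ((∀ φ : PP σ 0, φ.Sat A Fin.elim0 → φ.Sat B Fin.elim0) ↔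
      (∃ h : α → β, IsHom A B h)) ∧
    ((∃ h : α → β, IsHom A B h) ↔ (canonicalQuery A e).Sat B Fin.elim0) := by
  classical
  set L := (Finset.univ.filter
      (fun p : Σ s : σ.symb, Fin (σ.ar s) → α => A.rel p.1 p.2)).toList with hL
  have hmem : ∀ p : Σ s : σ.symb, Fin (σ.ar s) → α, p ∈ L ↔ A.rel p.1 p.2 := by
    intro p; simp [hL]
  have hsat : ∀ {γ : Type} (C : Struc σ γ),
      (canonicalQuery A e).Sat C Fin.elim0 ↔
        ∃ w : Fin (Fintype.card α) → γ,
          ∀ p : Σ s : σ.symb, Fin (σ.ar s) → α, A.rel p.1 p.2 →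
            C.rel p.1 (fun i => w (e (p.2 i))) := by
    intro γ C
    rw [canonicalQuery, PP.sat_exs]
    constructor
    · rintro ⟨v, hv⟩
      rw [PP.sat_conjList] at hv
      refine ⟨v, fun p hp => ?_⟩
      exact hv _ (List.mem_map.2 ⟨p, (hmem p).2 hp, rfl⟩)
    · rintro ⟨v, hv⟩
      refine ⟨v, (PP.sat_conjList _ _ _).2 ?_⟩
      rintro φ hφ
      rcases List.mem_map.1 hφ with ⟨p, hp, rfl⟩
      exact hv p ((hmem p).1 hp)
  have hBsat : (canonicalQuery A e).Sat B Fin.elim0 ↔ ∃ h : α → β, IsHom A B h := by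
    rw [hsat B]
    constructor
    · rintro ⟨w, hw⟩
      refine ⟨fun a => w (e a), fun s t ht => hw ⟨s, t⟩ ht⟩
    · rintro ⟨h, hh⟩
      refine ⟨fun i => h (e.symm i), fun p hp => ?_⟩
      have := hh p.1 p.2 hp
      simpa using this
  have hAsat : (canonicalQuery A e).Sat A Fin.elim0 := by
    rw [hsat A]
    exact ⟨fun i => e.symm i, fun p hp => by simpa using hp⟩
  constructor
  · constructor
    · intro hpp
      exact hBsat.1 (hpp _ hAsat)
    · rintro ⟨h, hh⟩ φ hφ
      have := PP.sat_of_hom hh φ Fin.elim0 hφ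
      rwa [Subsingleton.elim Fin.elim0 (fun i : Fin 0 => h (Fin.elim0 i))]
  · exact hBsat.symm
end

section
/- Any two cores of the same finite relational structure are isomorphic. -/
/-- The substructure of `A` induced on a subset `S` of its domain. -/
def induced {σ : Signature} {α : Type} (A : Struc σ α) (S : Set α) : Struc σ S :=
  ⟨fun s t => A.rel s (fun i => (t i : α))⟩

/-- Homomorphic equivalence: homomorphisms exist in both directions. -/
def HomEquiv {σ : Signature} {α β : Type} (A : Struc σ α) (B : Struc σ β) : Prop :=
  (∃ h : α → β, IsHom A B h) ∧ (∃ g : β → α, IsHom B A g)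

/-- `S` induces a core of `A`: a minimal (w.r.t. inclusion) induced substructure
homomorphically equivalent to `A`. -/
def IsCore {σ : Signature} {α : Type} (A : Struc σ α) (S : Set α) : Prop :=
  HomEquiv A (induced A S) ∧ ∀ T : Set α, T ⊂ S → ¬ HomEquiv A (induced A T)

lemma hom_comp {σ : Signature} {α β γ : Type} {A : Struc σ α} {B : Struc σ β} {C : Struc σ γ}
    {f : α → β} {g : β → γ} (hf : IsHom A B f) (hg : IsHom B C g) :
    IsHom A C (fun a => g (f a)) :=
  fun s t ht => hg s (fun i => f (t i)) (hf s t ht)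

lemma hom_iterate {σ : Signature} {α : Type} {A : Struc σ α} {e : α → α}
    (he : IsHom A A e) (n : ℕ) : IsHom A A (e^[n]) := by
  induction n with
  | zero => intro s t ht; simpa using ht
  | succ n ih =>
      intro s t ht
      simpa [Function.iterate_succ_apply'] using he s _ (ih s t ht)

lemma core_endo_surjective {σ : Signature} {α : Type} (A : Struc σ α) (S : Set α)
    (hS : IsCore A S) (e : S → S) (he : IsHom (induced A S) (induced A S) e) :
    Function.Surjective e := by
  set T : Set α := Subtype.val '' Set.range e with hT
  have hTS : T ⊆ S := by rintro a ⟨x, -, rfl⟩; exact x.2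
  obtain ⟨⟨h, hh⟩, ⟨g, hg⟩⟩ := hS.1
  have hequiv : HomEquiv A (induced A T) := by
    constructor
    · refine ⟨fun a => ⟨↑(e (h a)), ⟨e (h a), ⟨h a, rfl⟩, rfl⟩⟩, ?_⟩
      intro s t ht
      exact he s (fun i => h (t i)) (hh s t ht)
    · refine ⟨fun x => g ⟨↑x, hTS x.2⟩, ?_⟩
      intro s t ht
      exact hg s (fun i => ⟨↑(t i), hTS (t i).2⟩) ht
  have hTeq : T = S := by
    by_contra hne
    exact hS.2 T ⟨hTS, fun hsub => hne (le_antisymm hTS hsub)⟩ hequiv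
  intro x
  have hx : (↑x : α) ∈ T := by rw [hTeq]; exact x.2
  obtain ⟨b, ⟨y, rfl⟩, hb⟩ := hx
  exact ⟨y, Subtype.ext hb⟩

/-- Any two cores of the same finite relational structure are
isomorphic. -/
theorem cores_isomorphic {σ : Signature} {α : Type} [Finite α] (A : Struc σ α)
    (S S' : Set α) (hS : IsCore A S) (hS' : IsCore A S') :
    ∃ e : S ≃ S', IsHom (induced A S) (induced A S') e ∧
      IsHom (induced A S') (induced A S) e.symm := by
  obtain ⟨⟨h, hh⟩, ⟨g, hg⟩⟩ := hS.1
  obtain ⟨⟨h', hh'⟩, ⟨g', hg'⟩⟩ := hS'.1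
  set f : S → S' := fun x => h' (g x) with hfdef
  set f' : S' → S := fun x => h (g' x) with hf'def
  have hfhom : IsHom (induced A S) (induced A S') f := hom_comp hg hh'
  have hf'hom : IsHom (induced A S') (induced A S) f' := hom_comp hg' hh
  set e1 : S → S := fun x => f' (f x) with he1def
  set e2 : S' → S' := fun x => f (f' x) with he2def
  have he1hom : IsHom (induced A S) (induced A S) e1 := hom_comp hfhom hf'hom
  have he2hom : IsHom (induced A S') (induced A S') e2 := hom_comp hf'hom hfhom
  have he1surj : Function.Surjective e1 := core_endo_surjective A S hS e1 he1hom
  have he2surj : Function.Surjective e2 := core_endo_surjective A S' hS' e2 he2hom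
  have he1inj : Function.Injective e1 := Finite.injective_iff_surjective.2 he1surj
  have he2inj : Function.Injective e2 := Finite.injective_iff_surjective.2 he2surj
  have hfinj : Function.Injective f := fun a b hab => he1inj (by simp [he1def, hab])
  have hfsurj : Function.Surjective f := fun y => ⟨f' (Function.surjInv he2surj y), by
    simpa [he2def] using Function.surjInv_eq he2surj y⟩
  -- e2 has finite order: ∃ n > 0, e2^[n] = id
  obtain ⟨i, j, hij, heq⟩ :=
    Finite.exists_ne_map_eq_of_infinite (fun k : ℕ => e2^[k])
  wlog hlt : i < j generalizing i j
  · exact this j i hij.symm heq.symm ((hij.lt_or_gt).resolve_left hlt)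
  have hn : ∀ x, e2^[j - i] x = x := by
    intro x
    have hinj : Function.Injective (e2^[i]) := he2inj.iterate i
    apply hinj
    have : e2^[i + (j - i)] x = e2^[j] x := by
      rw [Nat.add_sub_cancel' hlt.le]
    rw [Function.iterate_add_apply] at this
    rw [this, ← heq]
  set n : ℕ := j - i with hndef
  have hnpos : 0 < n := Nat.sub_pos_of_lt hlt
  set inv : S' → S := fun y => f' (e2^[n - 1] y) with hinvdef
  have hinvhom : IsHom (induced A S') (induced A S) inv :=
    hom_comp (hom_iterate he2hom (n - 1)) hf'hom
  have hright : ∀ y, f (inv y) = y := by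
    intro y
    have : e2 (e2^[n - 1] y) = y := by
      have := hn y
      rwa [← Nat.succ_pred_eq_of_pos hnpos, Function.iterate_succ_apply'] at this
    simpa [hinvdef, he2def] using this
  have hleft : ∀ x, inv (f x) = x := fun x => hfinj (hright (f x))
  refine ⟨⟨f, inv, hleft, hright⟩, ?_, ?_⟩
  · exact hfhom
  · exact hinvhom
end

section
/- If there exists a surjective hypermorphism from a finite relational structure A to a finite relational structure B, then every sentence of positive equality-free first-order logic (using only ∃, ∀, ∧, ∨ and relational atoms) true in A is also true in B. -/
/-- Positive equality-free first-order formulas (relational atoms, ∧, ∨ — including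
the empty conjunction `top` and empty disjunction `bot` — ∃ and ∀), `n` free variables. -/
inductive PEF (σ : Signature) : ℕ → Type
  | top {n} : PEF σ n
  | bot {n} : PEF σ n
  | atom {n} (s : σ.symb) (ts : Fin (σ.ar s) → Fin n) : PEF σ n
  | and {n} : PEF σ n → PEF σ n → PEF σ n
  | or {n} : PEF σ n → PEF σ n → PEF σ n
  | ex {n} : PEF σ (n + 1) → PEF σ n
  | all {n} : PEF σ (n + 1) → PEF σ n

/-- Satisfaction of a positive equality-free formula under a valuation. -/
def PEF.Sat {σ : Signature} {α : Type} (A : Struc σ α) :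
    ∀ {n}, PEF σ n → (Fin n → α) → Prop
  | _, .top, _ => True
  | _, .bot, _ => False
  | _, .atom s ts, v => A.rel s (fun i => v (ts i))
  | _, .and φ ψ, v => φ.Sat A v ∧ ψ.Sat A v
  | _, .or φ ψ, v => φ.Sat A v ∨ ψ.Sat A v
  | _, .ex φ, v => ∃ a, φ.Sat A (Fin.cons a v)
  | _, .all φ, v => ∀ a, φ.Sat A (Fin.cons a v)

/-- A surjective hypermorphism from `A` to `B`: a total, surjective, preserving
multivalued map from the domain of `A` to subsets of the domain of `B`. -/
structure SurjHyper {σ : Signature} {α β : Type} (A : Struc σ α) (B : Struc σ β)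
    (f : α → Set β) : Prop where
  total : ∀ a, (f a).Nonempty
  surj : ∀ b, ∃ a, b ∈ f a
  pres : ∀ s (t : Fin (σ.ar s) → α) (u : Fin (σ.ar s) → β),
    A.rel s t → (∀ i, u i ∈ f (t i)) → B.rel s u

theorem pef_aux {σ : Signature} {α β : Type} (A : Struc σ α) (B : Struc σ β)
    (f : α → Set β) (hf : SurjHyper A B f) :
    ∀ {n} (φ : PEF σ n) (v : Fin n → α) (w : Fin n → β),
      (∀ i, w i ∈ f (v i)) → φ.Sat A v → φ.Sat B w := by
  intro n φ
  induction φ with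
  | top => intro _ _ _ _; trivial
  | bot => intro _ _ _ h; exact h.elim
  | atom s ts => intro v w hvw h; exact hf.pres s (fun i => v (ts i)) _ h (fun i => hvw (ts i))
  | and φ ψ ih1 ih2 => intro v w hvw h; exact ⟨ih1 v w hvw h.1, ih2 v w hvw h.2⟩
  | or φ ψ ih1 ih2 =>
    intro v w hvw h
    exact h.elim (fun h => Or.inl (ih1 v w hvw h)) (fun h => Or.inr (ih2 v w hvw h))
  | ex φ ih =>
    intro v w hvw h
    obtain ⟨a, ha⟩ := h
    obtain ⟨b, hb⟩ := hf.total a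
    exact ⟨b, ih (Fin.cons a v) (Fin.cons b w)
      (fun i => Fin.cases hb (fun j => hvw j) i) ha⟩
  | all φ ih =>
    intro v w hvw h b
    obtain ⟨a, ha⟩ := hf.surj b
    exact ih (Fin.cons a v) (Fin.cons b w)
      (fun i => Fin.cases ha (fun j => hvw j) i) (h a)

/-- A surjective hypermorphism from `A` to `B` transfers truth of
all positive equality-free first-order sentences from `A` to `B`. -/
theorem pef_preservation_by_surjHyper {σ : Signature} {α β : Type}
    [Finite α] [Finite β] (A : Struc σ α) (B : Struc σ β)
    (f : α → Set β) (hf : SurjHyper A B f) :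
    ∀ φ : PEF σ 0, φ.Sat A Fin.elim0 → φ.Sat B Fin.elim0 := by
  exact fun φ h => pef_aux A B f hf φ Fin.elim0 Fin.elim0 (fun i => i.elim0) h
end

section
/- If there is a surjective homomorphism from the m-th power A^m of a finite relational structure A onto a finite relational structure B, then every positive Horn sentence (using only ∃, ∀, ∧ and relational atoms, no equality) true in A is true in B. -/
/-- Positive Horn formulas (relational atoms, conjunction — including the empty
conjunction `top` — existential and universal quantification), with `n` free variables. -/
inductive PH (σ : Signature) : ℕ → Type
  | top {n} : PH σ n
  | atom {n} (s : σ.symb) (ts : Fin (σ.ar s) → Fin n) : PH σ n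
  | and {n} : PH σ n → PH σ n → PH σ n
  | ex {n} : PH σ (n + 1) → PH σ n
  | all {n} : PH σ (n + 1) → PH σ n

/-- Satisfaction of a positive Horn formula under a valuation. -/
def PH.Sat {σ : Signature} {α : Type} (A : Struc σ α) :
    ∀ {n}, PH σ n → (Fin n → α) → Prop
  | _, .top, _ => True
  | _, .atom s ts, v => A.rel s (fun i => v (ts i))
  | _, .and φ ψ, v => φ.Sat A v ∧ ψ.Sat A v
  | _, .ex φ, v => ∃ a, φ.Sat A (Fin.cons a v)
  | _, .all φ, v => ∀ a, φ.Sat A (Fin.cons a v)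

/-- The `m`-th categorical power of a structure. -/
def pow {σ : Signature} {α : Type} (A : Struc σ α) (m : ℕ) : Struc σ (Fin m → α) :=
  ⟨fun s t => ∀ j, A.rel s (fun i => t i j)⟩

theorem PH.sat_pow {σ : Signature} {α : Type} (A : Struc σ α) (m : ℕ) :
    ∀ {n} (φ : PH σ n) (v : Fin n → (Fin m → α)),
      (∀ j, φ.Sat A (fun i => v i j)) → φ.Sat (pow A m) v := by
  intro n φ
  induction φ with
  | top => intro v _; trivial
  | atom s ts => intro v hv j; exact hv j
  | and φ ψ ihφ ihψ =>
      intro v hv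
      exact ⟨ihφ v (fun j => (hv j).1), ihψ v (fun j => (hv j).2)⟩
  | ex φ ih =>
      intro v hv
      choose a ha using hv
      refine ⟨a, ih _ (fun j => ?_)⟩
      have : (fun i => (Fin.cons a v : Fin _ → Fin m → α) i j) = (Fin.cons (a j) (fun i => v i j) : Fin _ → α) := by
        funext i; refine Fin.cases ?_ ?_ i <;> simp
      rw [this]; exact ha j
  | all φ ih =>
      intro v hv a
      refine ih _ (fun j => ?_)
      have : (fun i => (Fin.cons a v : Fin _ → Fin m → α) i j) = (Fin.cons (a j) (fun i => v i j) : Fin _ → α) := by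
        funext i; refine Fin.cases ?_ ?_ i <;> simp
      rw [this]; exact hv j (a j)

theorem PH.sat_surj {σ : Signature} {γ β : Type} (C : Struc σ γ) (B : Struc σ β)
    (h : γ → β) (hh : IsHom C B h) (hsurj : Function.Surjective h) :
    ∀ {n} (φ : PH σ n) (v : Fin n → γ),
      φ.Sat C v → φ.Sat B (fun i => h (v i)) := by
  intro n φ
  induction φ with
  | top => intro v _; trivial
  | atom s ts => intro v hv; exact hh s _ hv
  | and φ ψ ihφ ihψ => intro v hv; exact ⟨ihφ v hv.1, ihψ v hv.2⟩
  | ex φ ih =>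
      intro v ⟨a, ha⟩
      refine ⟨h a, ?_⟩
      have := ih _ ha
      have e : (fun i => h ((Fin.cons a v : Fin _ → γ) i)) = (Fin.cons (h a) (fun i => h (v i)) : Fin _ → β) := by
        funext i; refine Fin.cases ?_ ?_ i <;> simp
      rwa [e] at this
  | all φ ih =>
      intro v hv b
      obtain ⟨a, rfl⟩ := hsurj b
      have := ih _ (hv a)
      have e : (fun i => h ((Fin.cons a v : Fin _ → γ) i)) = (Fin.cons (h a) (fun i => h (v i)) : Fin _ → β) := by
        funext i; refine Fin.cases ?_ ?_ i <;> simp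
      rwa [e] at this

/-- If there is a surjective homomorphism from the `m`-th power of
a finite structure `A` onto a finite structure `B` (with `m ≥ 1`), then every
positive Horn sentence true in `A` is true in `B`. -/
theorem ph_preservation_by_power_surj {σ : Signature} {α β : Type}
    [Finite α] [Finite β] (A : Struc σ α) (B : Struc σ β) (m : ℕ) (hm : 1 ≤ m)
    (h : (Fin m → α) → β) (hh : IsHom (pow A m) B h) (hsurj : Function.Surjective h) :
    ∀ φ : PH σ 0, φ.Sat A Fin.elim0 → φ.Sat B Fin.elim0 := by
  intro φ hφ
  have h1 : φ.Sat (pow A m) Fin.elim0 :=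
    PH.sat_pow A m φ Fin.elim0 (fun j => by
      have : (fun i : Fin 0 => (Fin.elim0 : Fin 0 → Fin m → α) i j) = (Fin.elim0 : Fin 0 → α) := by
        funext i; exact Fin.elim0 i
      rwa [this])
  have h2 := PH.sat_surj (pow A m) B h hh hsurj φ Fin.elim0 h1
  have e : (fun i : Fin 0 => h ((Fin.elim0 : Fin 0 → Fin m → α) i)) = (Fin.elim0 : Fin 0 → β) := by
    funext i; exact Fin.elim0 i
  rwa [e] at h2
end

section
/- For every m ≥ 2 there exist finite structures A and B over the signature with one binary relation E and one unary relation R, with |A| = m and |B| = m+1, such that a surjective homomorphism from A^j to B exists if and only if j ≥ m. -/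
/-- The signature with one binary relation symbol `E` (coded `true`) and one unary
relation symbol `R` (coded `false`). -/
def graphSig : Signature := ⟨Bool, fun b => if b then 2 else 1⟩


section Aux

def e0 : Fin (graphSig.ar true) := ⟨0, by decide⟩
def e1 : Fin (graphSig.ar true) := ⟨1, by decide⟩
def r0 : Fin (graphSig.ar false) := ⟨0, by decide⟩

/-- The directed `m`-cycle with `R` holding off `0`. -/
def strucA (m : ℕ) [NeZero m] : Struc graphSig (Fin m) :=
  ⟨fun s => match s with
    | true => fun t => t e1 = t e0 + 1
    | false => fun t => t r0 ≠ 0⟩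

/-- The directed `m`-cycle (no `R`) plus a looped vertex `m` with `R`. -/
def strucB (m : ℕ) : Struc graphSig (Fin (m + 1)) :=
  ⟨fun s => match s with
    | true => fun t =>
        ((t e0).val < m ∧ (t e1).val < m ∧ (t e1).val = ((t e0).val + 1) % m)
        ∨ ((t e0).val = m ∧ (t e1).val = m)
    | false => fun t => (t r0).val = m⟩

def covers (m j : ℕ) (x : Fin j → Fin m) : Prop := ∀ v : Fin m, ∃ i, x i = v

instance (m j : ℕ) : DecidablePred (covers m j) := fun x => by
  unfold covers; infer_instance

def hmap (m j : ℕ) (x : Fin j → Fin m) : Fin (m + 1) :=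
  if h : covers m j x ∧ 0 < j then (x ⟨0, h.2⟩).castSucc else Fin.last m

end Aux

section Lemmas
variable {m j : ℕ}

lemma val_add_one_mod [NeZero m] (a : Fin m) : (a + 1).val = (a.val + 1) % m := by
  rw [Fin.add_def, Fin.val_one']
  exact Nat.add_mod_mod _ _ _

open Fin.CommRing in
lemma covers_succ [NeZero m] (x : Fin j → Fin m) :
    covers m j (fun i => x i + 1) ↔ covers m j x := by
  constructor
  · intro h v
    obtain ⟨i, hi⟩ := h (v + 1)
    exact ⟨i, by simpa using hi⟩
  · intro h v
    obtain ⟨i, hi⟩ := h (v - 1)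
    exact ⟨i, by show x i + 1 = v; rw [hi]; ring⟩

lemma hmap_hom [NeZero m] : IsHom (pow (strucA m) j) (strucB m) (hmap m j) := by
  intro s t ht
  cases s
  · -- R
    have hne : ∀ k, t r0 k ≠ 0 := fun k => ht k
    show (hmap m j (t r0)).val = m
    rw [hmap, dif_neg, Fin.val_last]
    rintro ⟨hc, -⟩
    obtain ⟨i, hi⟩ := hc 0
    exact hne i hi
  · -- E
    have hxy : t e1 = fun k => t e0 k + 1 := funext fun k => ht k
    show _ ∨ _
    by_cases hc : covers m j (t e0) ∧ 0 < j
    · left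
      have hc' : covers m j (t e1) ∧ 0 < j := by
        rw [hxy]; exact ⟨(covers_succ _).2 hc.1, hc.2⟩
      simp only [hmap, dif_pos hc, dif_pos hc', Fin.coe_castSucc]
      refine ⟨Fin.is_lt _, Fin.is_lt _, ?_⟩
      simp only [hxy]
      exact val_add_one_mod _
    · right
      have hc' : ¬(covers m j (t e1) ∧ 0 < j) := by
        rw [hxy]; rintro ⟨h1, h2⟩; exact hc ⟨(covers_succ _).1 h1, h2⟩
      simp only [hmap, dif_neg hc, dif_neg hc', Fin.val_last]
      exact ⟨trivial, trivial⟩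

end Lemmas

section Lemmas2
variable {m j : ℕ}

lemma hmap_surj (hm : 2 ≤ m) (hmj : m ≤ j) : Function.Surjective (hmap m j) := by
  haveI : NeZero m := ⟨by omega⟩
  intro v
  by_cases hv : v.val < m
  · refine ⟨fun i => ⟨(v.val + i.val) % m, Nat.mod_lt _ (by omega)⟩, ?_⟩
    have hc : covers m j (fun i => ⟨(v.val + i.val) % m, Nat.mod_lt _ (by omega)⟩) ∧ 0 < j := by
      refine ⟨fun w => ⟨⟨(m + w.val - v.val) % m, lt_of_lt_of_le (Nat.mod_lt _ (by omega)) hmj⟩, ?_⟩, by omega⟩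
      apply Fin.ext
      show (v.val + (m + w.val - v.val) % m) % m = w.val
      rw [Nat.add_mod_mod, show v.val + (m + w.val - v.val) = m + w.val by omega,
        Nat.add_mod_left]
      exact Nat.mod_eq_of_lt w.is_lt
    rw [hmap, dif_pos hc]
    apply Fin.ext
    show (v.val + 0) % m = v.val
    rw [Nat.add_zero]
    exact Nat.mod_eq_of_lt hv
  · refine ⟨fun _ => 0, ?_⟩
    have hvm : v.val < m + 1 := v.is_lt
    rw [hmap, dif_neg, Fin.ext_iff, Fin.val_last]
    · omega
    · rintro ⟨hc, -⟩
      obtain ⟨i, hi⟩ := hc 1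
      have h01 : (0 : Fin m) = 1 := hi
      have h02 := congrArg Fin.val h01
      rw [Fin.val_zero, Fin.val_one', Nat.mod_eq_of_lt (show 1 < m by omega)] at h02
      exact absurd h02 (by omega)

lemma back_step [NeZero m] {h : (Fin j → Fin m) → Fin (m + 1)}
    (hhom : IsHom (pow (strucA m) j) (strucB m) h) (x : Fin j → Fin m)
    (hx : (h (fun i => x i + 1)).val = m) : (h x).val = m := by
  classical
  set t : Fin (graphSig.ar true) → Fin j → Fin m :=
    fun k => if k = e0 then x else fun i => x i + 1 with ht
  have ht0 : t e0 = x := if_pos rfl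
  have ht1 : t e1 = fun i => x i + 1 := if_neg (by decide)
  have hrel : (pow (strucA m) j).rel true t := by
    intro k
    show t e1 k = t e0 k + 1
    rw [ht0, ht1]
  have := hhom true t hrel
  rcases this with ⟨-, h2, -⟩ | ⟨h1, -⟩
  · exfalso
    have : (h (t e1)).val < m := h2
    rw [ht1] at this; omega
  · have : (h (t e0)).val = m := h1
    rwa [ht0] at this

open Fin.NatCast Fin.CommRing in
lemma back_orbit [NeZero m] {h : (Fin j → Fin m) → Fin (m + 1)}
    (hhom : IsHom (pow (strucA m) j) (strucB m) h) (x : Fin j → Fin m) :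
    ∀ c : ℕ, (h (fun i => x i + (c : Fin m))).val = m → (h x).val = m := by
  intro c
  induction c with
  | zero => simp
  | succ c ih =>
    intro hc
    apply ih
    apply back_step hhom
    have : (fun i => (fun i => x i + (c : Fin m)) i + 1) = fun i => x i + ((c + 1 : ℕ) : Fin m) := by
      funext i
      push_cast
      ring
    rw [this]
    exact hc

end Lemmas2

/-- For every `m ≥ 2` there are finite structures `A` (of size `m`)
and `B` (of size `m+1`) over the signature `{E, R}` such that a surjective
homomorphism from `A^j` to `B` exists if and only if `j ≥ m`. -/
theorem power_surjection_lower_bound (m : ℕ) (hm : 2 ≤ m) :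
    ∃ (A : Struc graphSig (Fin m)) (B : Struc graphSig (Fin (m + 1))),
      ∀ j : ℕ,
        (∃ h : (Fin j → Fin m) → Fin (m + 1),
          IsHom (pow A j) B h ∧ Function.Surjective h) ↔ m ≤ j := by
  haveI : NeZero m := ⟨by omega⟩
  refine ⟨strucA m, strucB m, fun j => ⟨?_, fun hmj => ⟨hmap m j, hmap_hom, hmap_surj hm hmj⟩⟩⟩
  rintro ⟨h, hhom, hsurj⟩
  by_contra hjm
  push_neg at hjm
  -- some x maps to 0
  obtain ⟨x, hx⟩ := hsurj ⟨0, by omega⟩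
  -- find c with all coordinates of x + c nonzero
  have hns : ¬ Function.Surjective (fun i : Fin j => -(x i)) := by
    intro hs
    have := Fintype.card_le_of_surjective _ hs
    simp only [Fintype.card_fin] at this
    omega
  rw [Function.Surjective] at hns
  push_neg at hns
  obtain ⟨c, hc⟩ := hns
  have hnz : ∀ i, x i + c ≠ 0 := by
    intro i h0
    exact hc i (by rw [← neg_eq_of_add_eq_zero_right h0])
  -- R forces h (x + c) = m
  have hR : (h (fun i => x i + c)).val = m := by
    have := hhom false (fun _ => fun i => x i + c) (fun k => hnz k)
    exact this
  -- propagate back along the orbit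
  have : (h x).val = m := by
    apply back_orbit hhom x c.val
    rwa [Fin.cast_val_eq_self]
  rw [hx] at this
  simp at this
  omega
end

section
/- If B is a two-element relational structure (possibly over an infinite relational signature) in which the elements 0 and 1 satisfy exactly the same positive Horn formulas in one free variable, then B has an automorphism swapping 0 and 1. -/
lemma struc_rel_congr {σ : Signature} (B : Struc σ Bool) (s : σ.symb)
    {f g : Fin (σ.ar s) → Bool} (hfg : ∀ i, f i = g i) (hf : B.rel s f) :
    B.rel s g := by
  have : f = g := funext hfg
  exact this ▸ hf

lemma swap_key {σ : Signature} (B : Struc σ Bool)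
    (h : ∀ φ : PH σ 1, φ.Sat B (fun _ => false) ↔ φ.Sat B (fun _ => true))
    (s : σ.symb) (t : Fin (σ.ar s) → Bool) (ht : B.rel s t) :
    B.rel s (fun i => !(t i)) := by
  by_contra hn
  set ts1 : Fin (σ.ar s) → Fin 2 := fun i => if t i then 0 else 1 with hts1
  have hφ0 : (PH.ex (PH.atom s ts1)).Sat B (fun _ => false) := by
    refine ⟨true, ?_⟩
    show B.rel s _
    refine struc_rel_congr B s (fun i => ?_) ht
    by_cases hi : t i <;> simp [hts1, hi]
  obtain ⟨a, ha⟩ := (h _).mp hφ0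
  replace ha : B.rel s (fun i => (Fin.cons a (fun _ => true) : Fin 2 → Bool) (ts1 i)) := ha
  have htop : B.rel s (fun _ => true) := by
    cases a with
    | false =>
      exfalso; apply hn
      refine struc_rel_congr B s (fun i => ?_) ha
      by_cases hi : t i <;> simp [hts1, hi]
    | true =>
      refine struc_rel_congr B s (fun i => ?_) ha
      by_cases hi : t i <;> simp [hts1, hi]
  set ts2 : Fin (σ.ar s) → Fin 2 := fun i => if t i then 1 else 0 with hts2
  have hψ1 : (PH.all (PH.atom s ts2)).Sat B (fun _ => true) := by
    intro a
    show B.rel s _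
    cases a with
    | false =>
      refine struc_rel_congr B s (fun i => ?_) ht
      by_cases hi : t i <;> simp [hts2, hi]
    | true =>
      refine struc_rel_congr B s (fun i => ?_) htop
      by_cases hi : t i <;> simp [hts2, hi]
  have hψ0 := (h _).mpr hψ1
  have key : B.rel s (fun i => (Fin.cons true (fun _ => false) : Fin 2 → Bool) (ts2 i)) := hψ0 true
  apply hn
  refine struc_rel_congr B s (fun i => ?_) key
  by_cases hi : t i <;> simp [hts2, hi]

/-- If the two elements of a two-element structure `B` (over a
possibly infinite relational signature) satisfy exactly the same positive Horn
formulas in one free variable, then `B` has an automorphism swapping the two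
elements. -/
theorem boolean_swap_automorphism {σ : Signature} (B : Struc σ Bool)
    (h : ∀ φ : PH σ 1, φ.Sat B (fun _ => false) ↔ φ.Sat B (fun _ => true)) :
    ∃ e : Bool ≃ Bool, (∀ b, e b = !b) ∧ IsHom B B e ∧ IsHom B B e.symm := by
  refine ⟨⟨not, not, Bool.not_not, Bool.not_not⟩, fun b => rfl, ?_, ?_⟩ <;>
    exact fun s t ht => swap_key B h s t ht
end

section
/- Two two-element relational structures that satisfy exactly the same positive Horn sentences are isomorphic. -/
namespace PHproof

open PH

variable {σ : Signature}

/-- Variable renaming. -/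
def rename : ∀ {n m : ℕ}, (Fin n → Fin m) → PH σ n → PH σ m
  | _, _, _, .top => .top
  | _, _, f, .atom s ts => .atom s (f ∘ ts)
  | _, _, f, .and φ ψ => .and (rename f φ) (rename f ψ)
  | _, _, f, .ex φ => .ex (rename (Fin.cases 0 (Fin.succ ∘ f)) φ)
  | _, _, f, .all φ => .all (rename (Fin.cases 0 (Fin.succ ∘ f)) φ)

lemma cons_comp_cases {α : Type} {n m : ℕ} (f : Fin n → Fin m) (a : α) (v : Fin m → α) :
    (Fin.cons a v) ∘ (Fin.cases 0 (Fin.succ ∘ f) : Fin (n+1) → Fin (m+1))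
      = Fin.cons a (v ∘ f) := by
  funext i
  refine Fin.cases ?_ ?_ i <;> simp

lemma sat_rename {α : Type} (X : Struc σ α) :
    ∀ {n} (φ : PH σ n) {m} (f : Fin n → Fin m) (v : Fin m → α),
      (rename f φ).Sat X v ↔ φ.Sat X (v ∘ f) := by
  intro n φ
  induction φ with
  | top => intro m f v; simp [rename, PH.Sat]
  | atom s ts => intro m f v; simp [rename, PH.Sat, Function.comp]
  | and φ ψ ihφ ihψ => intro m f v; simp [rename, PH.Sat, ihφ, ihψ]
  | ex φ ih =>
      intro m f v
      simp only [rename, PH.Sat]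
      refine exists_congr fun a => ?_
      rw [ih, cons_comp_cases]
  | all φ ih =>
      intro m f v
      simp only [rename, PH.Sat]
      refine forall_congr' fun a => ?_
      rw [ih, cons_comp_cases]


/-! ### Two-element specific machinery -/

/-- 1-variable type membership. -/
def t1 (X : Struc σ Bool) (φ : PH σ 1) (a : Bool) : Prop :=
  φ.Sat X (Fin.cons a Fin.elim0)

/-- 2-variable type membership. -/
def t2 (X : Struc σ Bool) (ψ : PH σ 2) (a b : Bool) : Prop :=
  ψ.Sat X (Fin.cons a (Fin.cons b Fin.elim0))

def swap2 (ψ : PH σ 2) : PH σ 2 := rename ![1, 0] ψ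
def diag (ψ : PH σ 2) : PH σ 1 := rename (fun _ => 0) ψ
def lift0 (φ : PH σ 1) : PH σ 2 := rename (fun _ => 0) φ
def lift1 (φ : PH σ 1) : PH σ 2 := rename (fun _ => 1) φ

variable {X : Struc σ Bool}

lemma t2_swap2 (ψ : PH σ 2) (a b : Bool) : t2 X (swap2 ψ) a b ↔ t2 X ψ b a := by
  unfold t2 swap2
  rw [sat_rename]
  have : (Fin.cons a (Fin.cons b Fin.elim0) : Fin 2 → Bool) ∘ ![1, 0]
      = Fin.cons b (Fin.cons a Fin.elim0) := by
    funext i; fin_cases i <;> rfl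
  rw [this]

lemma t1_diag (ψ : PH σ 2) (a : Bool) : t1 X (diag ψ) a ↔ t2 X ψ a a := by
  unfold t1 t2 diag
  rw [sat_rename]
  have : (Fin.cons a Fin.elim0 : Fin 1 → Bool) ∘ (fun _ => 0)
      = Fin.cons a (Fin.cons a Fin.elim0) := by
    funext i; fin_cases i <;> rfl
  rw [this]

lemma t2_lift0 (φ : PH σ 1) (a b : Bool) : t2 X (lift0 φ) a b ↔ t1 X φ a := by
  unfold t1 t2 lift0
  rw [sat_rename]
  have : (Fin.cons a (Fin.cons b Fin.elim0) : Fin 2 → Bool) ∘ (fun _ => (0 : Fin 2))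
      = Fin.cons a Fin.elim0 := by
    funext i; fin_cases i <;> rfl
  rw [this]

lemma t2_lift1 (φ : PH σ 1) (a b : Bool) : t2 X (lift1 φ) a b ↔ t1 X φ b := by
  unfold t1 t2 lift1
  rw [sat_rename]
  have : (Fin.cons a (Fin.cons b Fin.elim0) : Fin 2 → Bool) ∘ (fun _ => (1 : Fin 2))
      = Fin.cons b Fin.elim0 := by
    funext i; fin_cases i <;> rfl
  rw [this]

lemma t2_and (ψ χ : PH σ 2) (a b : Bool) : t2 X (.and ψ χ) a b ↔ t2 X ψ a b ∧ t2 X χ a b :=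
  Iff.rfl

lemma t1_and (φ χ : PH σ 1) (a : Bool) : t1 X (.and φ χ) a ↔ t1 X φ a ∧ t1 X χ a :=
  Iff.rfl

lemma t1_exA (ψ : PH σ 2) (b : Bool) : t1 X (.ex ψ) b ↔ ∃ a, t2 X ψ a b := Iff.rfl
lemma t1_allA (ψ : PH σ 2) (b : Bool) : t1 X (.all ψ) b ↔ ∀ a, t2 X ψ a b := Iff.rfl

lemma t1_exB (ψ : PH σ 2) (a : Bool) : t1 X (.ex (swap2 ψ)) a ↔ ∃ b, t2 X ψ a b := by
  rw [t1_exA]; exact exists_congr fun b => t2_swap2 ψ b a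

lemma t1_allB (ψ : PH σ 2) (a : Bool) : t1 X (.all (swap2 ψ)) a ↔ ∀ b, t2 X ψ a b := by
  rw [t1_allA]; exact forall_congr' fun b => t2_swap2 ψ b a

lemma sat_ex_sentence (φ : PH σ 1) : (PH.ex φ).Sat X Fin.elim0 ↔ ∃ a, t1 X φ a := Iff.rfl
lemma sat_all_sentence (φ : PH σ 1) : (PH.all φ).Sat X Fin.elim0 ↔ ∀ a, t1 X φ a := Iff.rfl

/-- If `φ` holds at `c` but not at `!c`, it holds exactly at `c`. -/
lemma exact_point {φ : PH σ 1} {c : Bool} (hc : t1 X φ c) (hnc : ¬ t1 X φ (!c)) :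
    ∀ a, t1 X φ a ↔ a = c := by
  intro a
  constructor
  · intro ha
    by_contra hne
    have : a = !c := by cases a <;> cases c <;> simp_all
    exact hnc (this ▸ ha)
  · rintro rfl; exact hc

lemma exists_equiv (x y : Bool) : ∃ e : Bool ≃ Bool, e x = y ∧ e (!x) = !y := by
  cases x <;> cases y
  · exact ⟨Equiv.refl _, rfl, rfl⟩
  · exact ⟨⟨Bool.not, Bool.not, Bool.not_not, Bool.not_not⟩, rfl, rfl⟩
  · exact ⟨⟨Bool.not, Bool.not, Bool.not_not, Bool.not_not⟩, rfl, rfl⟩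
  · exact ⟨Equiv.refl _, rfl, rfl⟩


/-! ### Case 1: equal 1-types -/

/-- If the two elements of `X` have equal 1-types, every 2-table is invariant
under global negation. -/
lemma sym_of_eq (X : Struc σ Bool)
    (hT : ∀ φ : PH σ 1, t1 X φ false ↔ t1 X φ true) :
    ∀ (ψ : PH σ 2) (a b : Bool), t2 X ψ a b → t2 X ψ (!a) (!b) := by
  have hT' : ∀ (φ : PH σ 1) (c : Bool), t1 X φ c → t1 X φ (!c) := by
    intro φ c hc
    cases c
    · exact (hT φ).mp hc
    · exact (hT φ).mpr hc
  have key : ∀ (ψ : PH σ 2), t2 X ψ false true → t2 X ψ true false := by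
    intro ψ h01
    by_contra h10
    -- row 1 nonempty, so (1,1) ∈ table
    have h11 : t2 X ψ true true := by
      have h1 : t1 X (.ex (swap2 ψ)) false := (t1_exB ψ false).mpr ⟨true, h01⟩
      have h2 := (t1_exB ψ true).mp (hT' _ false h1)
      rcases h2 with ⟨b, hb⟩
      cases b
      · exact absurd hb h10
      · exact hb
    -- column 0 nonempty, so (0,0) ∈ table
    have h00 : t2 X ψ false false := by
      have h1 : t1 X (.ex ψ) true := (t1_exA ψ true).mpr ⟨false, h01⟩
      have h2 := (t1_exA ψ false).mp (hT' _ true h1)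
      rcases h2 with ⟨a, ha⟩
      cases a
      · exact ha
      · exact absurd ha h10
    -- row 0 full, hence row 1 full, contradiction
    have h3 : t1 X (.all (swap2 ψ)) false := by
      rw [t1_allB]; intro b; cases b
      · exact h00
      · exact h01
    have h4 := (t1_allB ψ true).mp (hT' _ false h3)
    exact h10 (h4 false)
  intro ψ a b hab
  cases a <;> cases b
  · -- (false,false) → (true,true)
    exact (t1_diag ψ true).mp (hT' (diag ψ) false ((t1_diag ψ false).mpr hab))
  · exact key ψ hab
  · have := key (swap2 ψ) ((t2_swap2 ψ false true).mpr hab)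
    exact (t2_swap2 ψ true false).mp this
  · exact (t1_diag ψ false).mp (hT' (diag ψ) true ((t1_diag ψ true).mpr hab))

section TwoStruc

variable (A B : Struc σ Bool)
variable (hE : ∀ φ : PH σ 1, (∃ a, t1 A φ a) ↔ ∃ a, t1 B φ a)
variable (hAll : ∀ φ : PH σ 1, (∀ a, t1 A φ a) ↔ ∀ a, t1 B φ a)

include hE hAll in
lemma eq_types_transfer (hT : ∀ φ : PH σ 1, t1 A φ false ↔ t1 A φ true) :
    ∀ φ : PH σ 1, t1 B φ false ↔ t1 B φ true := by
  have step : ∀ (φ : PH σ 1) (c : Bool), t1 B φ c → ∀ d, t1 B φ d := by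
    intro φ c hc d
    have hex : ∃ a, t1 A φ a := (hE φ).mpr ⟨c, hc⟩
    have hall : ∀ a, t1 A φ a := by
      rcases hex with ⟨a, ha⟩
      intro x
      cases a <;> cases x
      · exact ha
      · exact (hT φ).mp ha
      · exact (hT φ).mpr ha
      · exact ha
    exact (hAll φ).mp hall d
  intro φ
  exact ⟨fun hc => step φ false hc true, fun hc => step φ true hc false⟩

include hE hAll in
lemma case1_match (hT : ∀ φ : PH σ 1, t1 A φ false ↔ t1 A φ true) :
    ∀ (ψ : PH σ 2) (a b : Bool), t2 A ψ a b ↔ t2 B ψ a b := by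
  have hTB := eq_types_transfer A B hE hAll hT
  have symA := sym_of_eq A hT
  have symB := sym_of_eq B hTB
  -- diagonal entries match
  have dmatch : ∀ ψ : PH σ 2, t2 A ψ false false ↔ t2 B ψ false false := by
    intro ψ
    have hd := hE (diag ψ)
    constructor
    · intro hA0
      have : ∃ a, t1 B (diag ψ) a := hd.mp ⟨false, (t1_diag ψ false).mpr hA0⟩
      rcases this with ⟨a, ha⟩
      have ha' := (t1_diag ψ a).mp ha
      cases a
      · exact ha'
      · exact symB ψ true true ha'
    · intro hB0
      have : ∃ a, t1 A (diag ψ) a := hd.mpr ⟨false, (t1_diag ψ false).mpr hB0⟩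
      rcases this with ⟨a, ha⟩
      have ha' := (t1_diag ψ a).mp ha
      cases a
      · exact ha'
      · exact symA ψ true true ha'
  -- off-diagonal entries match
  have omatch : ∀ ψ : PH σ 2, t2 A ψ false true ↔ t2 B ψ false true := by
    intro ψ
    by_cases hd : t2 A ψ false false
    · have hdB : t2 B ψ false false := (dmatch ψ).mp hd
      have hfull := hAll (.all (swap2 ψ))
      constructor
      · intro h01
        have hallA : ∀ a, t1 A (.all (swap2 ψ)) a := by
          intro a
          rw [t1_allB]
          intro b
          cases a <;> cases b
          · exact hd
          · exact h01
          · exact symA ψ false true h01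
          · exact symA ψ false false hd
        have := (hfull.mp hallA) false
        rw [t1_allB] at this
        exact this true
      · intro h01
        have hallB : ∀ a, t1 B (.all (swap2 ψ)) a := by
          intro a
          rw [t1_allB]
          intro b
          cases a <;> cases b
          · exact hdB
          · exact h01
          · exact symB ψ false true h01
          · exact symB ψ false false hdB
        have := (hfull.mpr hallB) false
        rw [t1_allB] at this
        exact this true
    · have hdB : ¬ t2 B ψ false false := fun hc => hd ((dmatch ψ).mpr hc)
      have hne := hE (.ex (swap2 ψ))
      constructor
      · intro h01
        have : ∃ a, t1 B (.ex (swap2 ψ)) a := hne.mp ⟨false, (t1_exB ψ false).mpr ⟨true, h01⟩⟩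
        rcases this with ⟨a, ha⟩
        rcases (t1_exB ψ a).mp ha with ⟨b, hb⟩
        cases a <;> cases b
        · exact absurd hb hdB
        · exact hb
        · exact symB ψ true false hb
        · exact absurd (symB ψ true true hb) hdB
      · intro h01
        have : ∃ a, t1 A (.ex (swap2 ψ)) a := hne.mpr ⟨false, (t1_exB ψ false).mpr ⟨true, h01⟩⟩
        rcases this with ⟨a, ha⟩
        rcases (t1_exB ψ a).mp ha with ⟨b, hb⟩
        cases a <;> cases b
        · exact absurd hb hd
        · exact hb
        · exact symA ψ true false hb
        · exact absurd (symA ψ true true hb) hd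
  intro ψ a b
  cases a <;> cases b
  · exact dmatch ψ
  · exact omatch ψ
  · constructor
    · intro hx
      exact symB ψ false true ((omatch ψ).mp (symA ψ true false hx))
    · intro hx
      exact symA ψ false true ((omatch ψ).mpr (symB ψ true false hx))
  · constructor
    · intro hx
      exact symB ψ false false ((dmatch ψ).mp (symA ψ true true hx))
    · intro hx
      exact symA ψ false false ((dmatch ψ).mpr (symB ψ true true hx))


/-! ### Case 2: incomparable 1-types -/

lemma t2_tag {X : Struc σ Bool} (ψ : PH σ 2) (χ χ' : PH σ 1) (a b : Bool) :
    t2 X (.and ψ (.and (lift0 χ) (lift1 χ'))) a b ↔ t2 X ψ a b ∧ t1 X χ a ∧ t1 X χ' b := by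
  rw [t2_and, t2_and, t2_lift0, t2_lift1]

include hE hAll in
lemma case2_match (φ0 φ1 : PH σ 1)
    (h00 : t1 A φ0 false) (h0t : ¬ t1 A φ0 true)
    (h1t : t1 A φ1 true) (h1f : ¬ t1 A φ1 false) :
    ∃ e : Bool ≃ Bool, ∀ (ψ : PH σ 2) (a b : Bool), t2 A ψ a b ↔ t2 B ψ (e a) (e b) := by
  have ptA0 : ∀ x, t1 A φ0 x ↔ x = false := exact_point h00 h0t
  have ptA1 : ∀ x, t1 A φ1 x ↔ x = true := exact_point h1t h1f
  obtain ⟨b0, hb0⟩ : ∃ a, t1 B φ0 a := (hE φ0).mp ⟨false, h00⟩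
  have hb0' : ¬ t1 B φ0 (!b0) := by
    intro hx
    have hall : ∀ a, t1 B φ0 a := by
      intro a; cases a <;> cases b0 <;> simp_all
    exact h0t ((hAll φ0).mpr hall true)
  obtain ⟨b1, hb1⟩ : ∃ a, t1 B φ1 a := (hE φ1).mp ⟨true, h1t⟩
  have hb1' : ¬ t1 B φ1 (!b1) := by
    intro hx
    have hall : ∀ a, t1 B φ1 a := by
      intro a; cases a <;> cases b1 <;> simp_all
    exact h1f ((hAll φ1).mpr hall false)
  have ptB0 : ∀ x, t1 B φ0 x ↔ x = b0 := exact_point hb0 hb0'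
  have ptB1 : ∀ x, t1 B φ1 x ↔ x = b1 := exact_point hb1 hb1'
  have bne : b0 ≠ b1 := by
    intro hbe
    have hx : ∃ x, t1 B (.and φ0 φ1) x := ⟨b0, (t1_and φ0 φ1 b0).mpr ⟨hb0, hbe ▸ hb1⟩⟩
    obtain ⟨x, hxA⟩ := (hE _).mpr hx
    rw [t1_and] at hxA
    cases x
    · exact h1f hxA.2
    · exact h0t hxA.1
  obtain ⟨e, he0, he1'⟩ := exists_equiv false b0
  have he1 : e true = b1 := by
    have : (!b0) = b1 := by cases b0 <;> cases b1 <;> simp_all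
    rw [← this]; exact he1'
  have pA : ∀ a x, t1 A (bif a then φ1 else φ0) x ↔ x = a := by
    intro a; cases a
    · exact ptA0
    · exact ptA1
  have pB : ∀ a x, t1 B (bif a then φ1 else φ0) x ↔ x = e a := by
    intro a; cases a
    · intro x; rw [he0]; exact ptB0 x
    · intro x; rw [he1]; exact ptB1 x
  refine ⟨e, fun ψ a b => ?_⟩
  have hsent := hE (.ex (swap2 (.and ψ (.and (lift0 (bif a then φ1 else φ0))
    (lift1 (bif b then φ1 else φ0))))))
  constructor
  · intro hab
    have hx : ∃ x, t1 A (.ex (swap2 (.and ψ (.and (lift0 (bif a then φ1 else φ0))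
        (lift1 (bif b then φ1 else φ0)))))) x :=
      ⟨a, (t1_exB _ a).mpr ⟨b, (t2_tag ψ _ _ a b).mpr ⟨hab, (pA a a).mpr rfl, (pA b b).mpr rfl⟩⟩⟩
    obtain ⟨x, hx'⟩ := hsent.mp hx
    obtain ⟨y, hy⟩ := (t1_exB _ x).mp hx'
    obtain ⟨hψ, hχ, hχ'⟩ := (t2_tag ψ _ _ x y).mp hy
    have hxe : x = e a := (pB a x).mp hχ
    have hye : y = e b := (pB b y).mp hχ'
    rw [hxe, hye] at hψ
    exact hψ
  · intro hab
    have hx : ∃ x, t1 B (.ex (swap2 (.and ψ (.and (lift0 (bif a then φ1 else φ0))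
        (lift1 (bif b then φ1 else φ0)))))) x :=
      ⟨e a, (t1_exB _ (e a)).mpr ⟨e b, (t2_tag ψ _ _ (e a) (e b)).mpr
        ⟨hab, (pB a (e a)).mpr rfl, (pB b (e b)).mpr rfl⟩⟩⟩
    obtain ⟨x, hx'⟩ := hsent.mpr hx
    obtain ⟨y, hy⟩ := (t1_exB _ x).mp hx'
    obtain ⟨hψ, hχ, hχ'⟩ := (t2_tag ψ _ _ x y).mp hy
    have hxe : x = a := (pA a x).mp hχ
    have hye : y = b := (pA b y).mp hχ'
    rw [hxe, hye] at hψ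
    exact hψ


/-! ### Case 3: one 1-type strictly contained in the other -/

include hE hAll in
lemma case3_match (a1 : Bool) (φs : PH σ 1)
    (hsub : ∀ φ : PH σ 1, t1 A φ (!a1) → t1 A φ a1)
    (hs1 : t1 A φs a1) (hs0 : ¬ t1 A φs (!a1)) :
    ∃ e : Bool ≃ Bool, ∀ (ψ : PH σ 2) (a b : Bool), t2 A ψ a b ↔ t2 B ψ (e a) (e b) := by
  have ptA : ∀ x, t1 A φs x ↔ x = a1 := exact_point hs1 hs0
  obtain ⟨b1, hb1⟩ : ∃ a, t1 B φs a := (hE φs).mp ⟨a1, hs1⟩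
  have hb0 : ¬ t1 B φs (!b1) := by
    intro hx
    have hall : ∀ a, t1 B φs a := by
      intro a; cases a <;> cases b1 <;> simp_all
    exact hs0 ((hAll φs).mpr hall (!a1))
  have ptB : ∀ x, t1 B φs x ↔ x = b1 := exact_point hb1 hb0
  have hsubB : ∀ φ : PH σ 1, t1 B φ (!b1) → t1 B φ b1 := by
    intro φ hφ
    by_contra hnb
    obtain ⟨a, haA⟩ : ∃ a, t1 A φ a := (hE φ).mpr ⟨!b1, hφ⟩
    have hA1 : t1 A φ a1 := by
      cases a <;> cases a1
      · exact haA
      · exact hsub φ haA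
      · exact hsub φ haA
      · exact haA
    obtain ⟨x, hx⟩ : ∃ x, t1 B (.and φ φs) x :=
      (hE _).mp ⟨a1, (t1_and φ φs a1).mpr ⟨hA1, hs1⟩⟩
    rw [t1_and] at hx
    have : x = b1 := (ptB x).mp hx.2
    exact hnb (this ▸ hx.1)
  -- per-structure characterization of each table entry by a quantified 1-variable formula
  have entries : ∀ (X : Struc σ Bool) (c1 : Bool) (φc : PH σ 1),
      (∀ φ : PH σ 1, t1 X φ (!c1) → t1 X φ c1) → (∀ x, t1 X φc x ↔ x = c1) →
      ∀ ψ : PH σ 2,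
        ((∃ x, t1 X (.and (diag ψ) φc) x) ↔ t2 X ψ c1 c1) ∧
        ((∀ x, t1 X (diag ψ) x) ↔ t2 X ψ (!c1) (!c1)) ∧
        ((∀ x, t1 X (.ex (swap2 (.and ψ (lift1 φc)))) x) ↔ t2 X ψ (!c1) c1) := by
    intro X c1 φc hsubX pt ψ
    have hΦ : ∀ x, t1 X (.ex (swap2 (.and ψ (lift1 φc)))) x ↔
        ∃ y, t2 X ψ x y ∧ t1 X φc y := by
      intro x
      rw [t1_exB]
      exact exists_congr fun y => by rw [t2_and, t2_lift1]
    refine ⟨⟨?_, ?_⟩, ⟨?_, ?_⟩, ⟨?_, ?_⟩⟩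
    · rintro ⟨x, hx⟩
      rw [t1_and] at hx
      have hxc : x = c1 := (pt x).mp hx.2
      have := (t1_diag ψ x).mp hx.1
      rw [hxc] at this
      exact this
    · intro hcc
      exact ⟨c1, (t1_and _ _ c1).mpr ⟨(t1_diag ψ c1).mpr hcc, (pt c1).mpr rfl⟩⟩
    · intro hall
      exact (t1_diag ψ (!c1)).mp (hall (!c1))
    · intro hnn
      have hbase : t1 X (diag ψ) (!c1) := (t1_diag ψ (!c1)).mpr hnn
      have htop : t1 X (diag ψ) c1 := hsubX _ hbase
      intro x
      cases x <;> cases c1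
      · exact htop
      · exact hbase
      · exact hbase
      · exact htop
    · intro hall
      obtain ⟨y, hy1, hy2⟩ := (hΦ (!c1)).mp (hall (!c1))
      have : y = c1 := (pt y).mp hy2
      rw [this] at hy1
      exact hy1
    · intro h01
      have hbase : t1 X (.ex (swap2 (.and ψ (lift1 φc)))) (!c1) :=
        (hΦ (!c1)).mpr ⟨c1, h01, (pt c1).mpr rfl⟩
      have htop := hsubX _ hbase
      intro x
      cases x <;> cases c1
      · exact htop
      · exact hbase
      · exact hbase
      · exact htop
  have entA := entries A a1 φs hsub ptA
  have entB := entries B b1 φs hsubB ptB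
  obtain ⟨e, he1, he0⟩ := exists_equiv a1 b1
  refine ⟨e, fun ψ a b => ?_⟩
  have haa : ∀ x : Bool, x = a1 ∨ x = !a1 := by
    intro x; cases x <;> cases a1 <;> simp
  rcases haa a with rfl | rfl <;> rcases haa b with rfl | rfl
  · rw [he1]
    exact ((entA ψ).1.symm.trans (hE _)).trans (entB ψ).1
  · rw [he1, he0, ← t2_swap2 (X := A), ← t2_swap2 (X := B)]
    exact ((entA (swap2 ψ)).2.2.symm.trans (hAll _)).trans (entB (swap2 ψ)).2.2
  · rw [he0, he1]
    exact ((entA ψ).2.2.symm.trans (hAll _)).trans (entB ψ).2.2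
  · rw [he0]
    exact ((entA ψ).2.1.symm.trans (hAll _)).trans (entB ψ).2.1

end TwoStruc


/-! ### From matching 2-types to an isomorphism -/

lemma match_atoms (A B : Struc σ Bool) (e : Bool ≃ Bool)
    (H : ∀ (ψ : PH σ 2) (a b : Bool), t2 A ψ a b ↔ t2 B ψ (e a) (e b)) :
    ∀ s (t : Fin (σ.ar s) → Bool), A.rel s t ↔ B.rel s (fun i => e (t i)) := by
  intro s t
  have h1 := H (.atom s (fun i => if t i then 1 else 0)) false true
  have key : ∀ (X : Struc σ Bool) (x y : Bool),
      t2 X (.atom s (fun i => if t i then 1 else 0)) x y ↔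
        X.rel s (fun i => if t i then y else x) := by
    intro X x y
    unfold t2
    show X.rel s (fun i => (Fin.cons x (Fin.cons y Fin.elim0) : Fin 2 → Bool)
        (if t i then 1 else 0)) ↔ _
    have : (fun i => (Fin.cons x (Fin.cons y Fin.elim0) : Fin 2 → Bool)
        (if t i then 1 else 0)) = (fun i => if t i then y else x) := by
      funext i
      cases t i <;> rfl
    rw [this]
  rw [key, key] at h1
  have hA : (fun i => if t i then true else false) = t := by
    funext i; cases t i <;> rfl
  have hB : (fun i => if t i then e true else e false) = (fun i => e (t i)) := by
    funext i; cases t i <;> rfl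
  rw [hA, hB] at h1
  exact h1

lemma iso_of_match (A B : Struc σ Bool) (e : Bool ≃ Bool)
    (H : ∀ s (t : Fin (σ.ar s) → Bool), A.rel s t ↔ B.rel s (fun i => e (t i))) :
    ∃ e : Bool ≃ Bool, IsHom A B e ∧ IsHom B A e.symm := by
  refine ⟨e, fun s t ht => (H s t).mp ht, fun s t ht => ?_⟩
  have h2 := (H s (fun i => e.symm (t i))).mpr
  have : (fun i => e (e.symm (t i))) = t := by
    funext i; simp
  rw [this] at h2
  exact h2 ht

end PHproof

/-- Two two-element relational structures over a common signature
that satisfy exactly the same positive Horn sentences are isomorphic. -/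
theorem boolean_ph_equiv_iso {σ : Signature} (A B : Struc σ Bool)
    (h : ∀ φ : PH σ 0, φ.Sat A Fin.elim0 ↔ φ.Sat B Fin.elim0) :
    ∃ e : Bool ≃ Bool, IsHom A B e ∧ IsHom B A e.symm := by
  classical
  open PHproof in
  have hE : ∀ φ : PH σ 1, (∃ a, t1 A φ a) ↔ ∃ a, t1 B φ a := fun φ => h (.ex φ)
  have hAll : ∀ φ : PH σ 1, (∀ a, t1 A φ a) ↔ ∀ a, t1 B φ a := fun φ => h (.all φ)
  obtain ⟨e, He⟩ : ∃ e : Bool ≃ Bool,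
      ∀ (ψ : PH σ 2) (a b : Bool), PHproof.t2 A ψ a b ↔ PHproof.t2 B ψ (e a) (e b) := by
    by_cases h01 : ∀ φ : PH σ 1, PHproof.t1 A φ false → PHproof.t1 A φ true
    · by_cases h10 : ∀ φ : PH σ 1, PHproof.t1 A φ true → PHproof.t1 A φ false
      · exact ⟨Equiv.refl Bool, fun ψ a b =>
          PHproof.case1_match A B hE hAll (fun φ => ⟨h01 φ, h10 φ⟩) ψ a b⟩
      · push_neg at h10
        obtain ⟨φs, hs1, hs0⟩ := h10
        exact PHproof.case3_match A B hE hAll true φs h01 hs1 hs0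
    · push_neg at h01
      obtain ⟨φ0, h00, h0t⟩ := h01
      by_cases h10 : ∀ φ : PH σ 1, PHproof.t1 A φ true → PHproof.t1 A φ false
      · exact PHproof.case3_match A B hE hAll false φ0 h10 h00 h0t
      · push_neg at h10
        obtain ⟨φ1, h1t, h1f⟩ := h10
        exact PHproof.case2_match A B hE hAll φ0 φ1 h00 h0t h1t h1f
  exact PHproof.iso_of_match A B e (PHproof.match_atoms A B e He)
end
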